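/- Let V = (ℤ/2)³ regarded as a vector space over the field with two elements, r a natural number, and v : {1, …, r} → V a tuple such that the image {v(1), …, v(r)} spans V, has exactly 3 distinct elements, and Σ_{i=1}^r v(i) = 0. Then the three distinct values of v form a basis of V, each of the three values occurs an even number of times among v(1), …, v(r), and consequently r is even and r ≥ 6. -/

import Mathlib

open scoped BigOperators

/-- Second part of Remark 4.1: if `v : {1,…,r} → (ℤ/2)³` is a tuple whose image spans
`(ℤ/2)³`, has exactly `3` distinct elements, and whose sum is `0`, then the three
distinct values form a basis, each value occurs an even number of times, and hence
`r` is even and `r ≥ 6`. -/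
theorem spherical_system_three_values
    (r : ℕ) (v : Fin r → (Fin 3 → ZMod 2))
    (hspan : Submodule.span (ZMod 2) (Set.range v) = ⊤)
    (hcard : (Finset.image v Finset.univ).card = 3)
    (hsum : ∑ i : Fin r, v i = 0) :
    (∃ b : Module.Basis (Fin 3) (ZMod 2) (Fin 3 → ZMod 2), Set.range b = Set.range v) ∧
      (∀ w ∈ Finset.image v Finset.univ,
        Even (Finset.univ.filter (fun i : Fin r => v i = w)).card) ∧
      Even r ∧ 6 ≤ r := by
  set S : Finset (Fin 3 → ZMod 2) := Finset.image v Finset.univ with hS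
  have hrange : (S : Set (Fin 3 → ZMod 2)) = Set.range v := by
    simp [hS]
  have hle : ⊤ ≤ Submodule.span (ZMod 2) (S : Set (Fin 3 → ZMod 2)) := by
    rw [hrange, hspan]
  have hfin : Module.finrank (ZMod 2) (Fin 3 → ZMod 2) = 3 := by
    simp
  have hcard' : S.card = Module.finrank (ZMod 2) (Fin 3 → ZMod 2) := by
    rw [hfin, hcard]
  -- the basis indexed by the subtype
  let b₀ : Module.Basis {x // x ∈ S} (ZMod 2) (Fin 3 → ZMod 2) :=
    finsetBasisOfTopLeSpanOfCardEqFinrank hle hcard'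
  have hb₀ : ⇑b₀ = (Subtype.val : {x // x ∈ S} → (Fin 3 → ZMod 2)) :=
    coe_basisOfTopLeSpanOfCardEqFinrank _ _ _
  have hcardS : Fintype.card {x // x ∈ S} = 3 := by
    rw [Fintype.card_coe, hcard]
  -- linear independence of the elements of S
  have hli : LinearIndependent (ZMod 2) (Subtype.val : {x // x ∈ S} → (Fin 3 → ZMod 2)) := by
    rw [← hb₀]; exact b₀.linearIndependent
  -- counts
  set c : (Fin 3 → ZMod 2) → ℕ :=
    fun w => (Finset.univ.filter (fun i : Fin r => v i = w)).card with hc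
  have key := Finset.sum_fiberwise_of_maps_to (s := Finset.univ) (t := S) (g := v)
    (fun i _ => Finset.mem_image_of_mem v (Finset.mem_univ i)) v
  have hsum' : ∑ w ∈ S, (c w) • w = 0 := by
    rw [← hsum, ← key]
    refine Finset.sum_congr rfl fun w _ => ?_
    rw [show (c w) • w = ∑ _i ∈ Finset.univ.filter (fun i : Fin r => v i = w), w from
      (Finset.sum_const _).symm]
    exact Finset.sum_congr rfl fun i hi => ((Finset.mem_filter.mp hi).2).symm
  have heven : ∀ w ∈ S, Even (c w) := by
    intro w hw
    have := Fintype.linearIndependent_iff.mp hli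
      (fun x => ((c x.1 : ZMod 2)))
      (by
        calc ∑ x : {x // x ∈ S}, (c x.1 : ZMod 2) • (x : Fin 3 → ZMod 2)
            = ∑ x : {x // x ∈ S}, (c x.1) • (x : Fin 3 → ZMod 2) := by
              refine Finset.sum_congr rfl fun x _ => ?_
              rw [Nat.cast_smul_eq_nsmul]
          _ = ∑ w ∈ S, (c w) • w := Finset.sum_coe_sort S (fun w => (c w) • w)
          _ = 0 := hsum')
      ⟨w, hw⟩
    have h2 : (2 : ℕ) ∣ c w := (ZMod.natCast_eq_zero_iff _ 2).mp this
    exact even_iff_two_dvd.mpr h2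
  have hr : r = ∑ w ∈ S, c w := by
    rw [← Fintype.card_fin r, ← Finset.card_univ]
    exact Finset.card_eq_sum_card_fiberwise
      (fun i _ => Finset.mem_image_of_mem v (Finset.mem_univ i))
  have hpos : ∀ w ∈ S, 2 ≤ c w := by
    intro w hw
    obtain ⟨i, _, hi⟩ := Finset.mem_image.mp hw
    have h1 : 1 ≤ c w := Finset.card_pos.mpr ⟨i, Finset.mem_filter.mpr ⟨Finset.mem_univ _, hi⟩⟩
    obtain ⟨k, hk⟩ := heven w hw
    omega
  refine ⟨?_, heven, ?_, ?_⟩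
  · -- basis indexed by Fin 3
    refine ⟨b₀.reindex (Fintype.equivFinOfCardEq hcardS), ?_⟩
    rw [Module.Basis.range_reindex, ← hrange]
    rw [hb₀]
    exact Subtype.range_coe
  · have h2 : 2 ∣ ∑ w ∈ S, c w := Finset.dvd_sum fun w hw => (heven w hw).two_dvd
    exact even_iff_two_dvd.mpr (hr ▸ h2)
  · have h6 : S.card • 2 ≤ ∑ w ∈ S, c w := Finset.card_nsmul_le_sum S c 2 hpos
    rw [hcard] at h6
    rw [hr]
    simpa using h6
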